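/- Let A > 0, W_s > 0, P_max > 0, let n ≥ 1 and n_r ≥ 1 be reals, and let B : (0,∞) → ℝ be the function assigning to each a > 0 the unique B(a) > 0 with B(a) + log B(a) = log(a·A) − 1. Define C(a) = n_r·a·(1 + n/B(a)) and W_m^*(a) = (P_max − C(a)·W_s)·B(a)/(a·(B(a) + 1)). Then W_m^* is strictly decreasing on the set {a > 0 : P_max − C(a)·W_s ≥ 0}; i.e., the optimal mmWave bandwidth decreases as the ADC power-consumption coefficient a increases. -/

import Mathlib

private lemma key12 (P Q n t₁ t₂ : ℝ) (hP : 0 < P) (hQ : 0 < Q) (hn : 1 ≤ n)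
    (ht₁ : 0 < t₁) (h12 : t₁ < t₂)
    (hcon : Q * (t₂ + n) ≤ P / Real.exp (t₂ + 1)) :
    (P / Real.exp (t₂ + 1) - Q * (t₂ + n)) / (t₂ + 1)
      < (P / Real.exp (t₁ + 1) - Q * (t₁ + n)) / (t₁ + 1) := by
  have he1 : (0:ℝ) < Real.exp (t₁ + 1) := Real.exp_pos _
  have he2 : (0:ℝ) < Real.exp (t₂ + 1) := Real.exp_pos _
  have hvu : P / Real.exp (t₂ + 1) < P / Real.exp (t₁ + 1) := by
    apply div_lt_div_of_pos_left hP he1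
    exact Real.exp_lt_exp.2 (by linarith)
  set u := P / Real.exp (t₁ + 1)
  set v := P / Real.exp (t₂ + 1)
  rw [div_lt_div_iff₀ (by linarith) (by linarith)]
  nlinarith [mul_pos (show (0:ℝ) < t₂ - t₁ by linarith)
      (show 0 < v - Q * (n - 1) by nlinarith),
    mul_nonneg (le_of_lt (sub_pos.2 hvu)) (show (0:ℝ) ≤ t₂ + 1 by linarith)]

/-- **The optimal mmWave bandwidth decreases in the ADC power coefficient `a`.**
With `B(a)` the unique positive solution of `B + log B = log(a·A) − 1` (the Wright
omega value `ω(log(aA) − 1)`), `C(a) = n_r·a·(1 + n/B(a))` and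
`W_m^*(a) = (P_max − C(a)·W_s)·B(a)/(a·(B(a) + 1))`, the map `a ↦ W_m^*(a)` is strictly
decreasing on `{a > 0 : P_max − C(a)·W_s ≥ 0}`. -/
theorem stmt_12 (A Ws Pmax n nr : ℝ) (hA : 0 < A) (hWs : 0 < Ws) (hPmax : 0 < Pmax)
    (hn : 1 ≤ n) (hnr : 1 ≤ nr)
    (B : ℝ → ℝ)
    (hB : ∀ a : ℝ, 0 < a → 0 < B a ∧ B a + Real.log (B a) = Real.log (a * A) - 1)
    (C Wm : ℝ → ℝ)
    (hC : C = fun a => nr * a * (1 + n / B a))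
    (hWm : Wm = fun a => (Pmax - C a * Ws) * B a / (a * (B a + 1))) :
    StrictAntiOn Wm {a : ℝ | 0 < a ∧ 0 ≤ Pmax - C a * Ws} := by
  -- exponential form of the defining equation
  have haA : ∀ a : ℝ, 0 < a → a * A = B a * Real.exp (B a + 1) := by
    intro a ha
    obtain ⟨hBp, hBe⟩ := hB a ha
    have h1 : Real.exp (Real.log (a * A)) = a * A := Real.exp_log (by positivity)
    have h2 : Real.log (a * A) = (B a + 1) + Real.log (B a) := by linarith
    rw [h2, Real.exp_add, Real.exp_log hBp] at h1
    linarith [h1]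
  -- closed form for Wm
  have hWmf : ∀ a : ℝ, 0 < a →
      Wm a = ((Pmax * A) / Real.exp (B a + 1) - (Ws * nr) * (B a + n)) / (B a + 1) := by
    intro a ha
    obtain ⟨hBp, _⟩ := hB a ha
    have hE : (0:ℝ) < Real.exp (B a + 1) := Real.exp_pos _
    have hrel := haA a ha
    rw [hWm, hC]
    simp only
    rw [div_eq_div_iff (by positivity) (by positivity)]
    field_simp
    linear_combination (-(Pmax * (B a + 1)) + Pmax * B a) * hrel
  -- constraint translation
  have hconf : ∀ a : ℝ, 0 < a → 0 ≤ Pmax - C a * Ws →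
      (Ws * nr) * (B a + n) ≤ (Pmax * A) / Real.exp (B a + 1) := by
    intro a ha hc
    obtain ⟨hBp, _⟩ := hB a ha
    have hE : (0:ℝ) < Real.exp (B a + 1) := Real.exp_pos _
    have hrel := haA a ha
    rw [hC] at hc
    simp only at hc
    rw [le_div_iff₀ hE]
    have hc' : nr * a * (1 + n / B a) * Ws ≤ Pmax := by linarith
    have h3 : nr * (a * B a + a * n) * Ws ≤ Pmax * B a := by
      have := mul_le_mul_of_nonneg_right hc' (le_of_lt hBp)
      calc nr * (a * B a + a * n) * Ws = nr * a * (1 + n / B a) * Ws * B a := by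
            field_simp
        _ ≤ Pmax * B a := this
    -- Pmax * A = Pmax * B a * E / a ;  want Ws*nr*(B+n)*E ≤ Pmax*A
    have : Ws * nr * (B a + n) * Real.exp (B a + 1) * a ≤ Pmax * A * a := by
      calc Ws * nr * (B a + n) * Real.exp (B a + 1) * a
          = nr * (a * B a + a * n) * Ws * (Real.exp (B a + 1)) := by ring
        _ ≤ Pmax * B a * Real.exp (B a + 1) := by
            exact mul_le_mul_of_nonneg_right h3 (le_of_lt hE)
        _ = Pmax * (a * A) := by rw [hrel]; ring
        _ = Pmax * A * a := by ring
    exact le_of_mul_le_mul_right this ha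
  -- B is strictly increasing
  intro a₁ h₁ a₂ h₂ h12
  obtain ⟨ha₁, hc₁⟩ := h₁
  obtain ⟨ha₂, hc₂⟩ := h₂
  obtain ⟨hB₁, hBe₁⟩ := hB a₁ ha₁
  obtain ⟨hB₂, hBe₂⟩ := hB a₂ ha₂
  have hBlt : B a₁ < B a₂ := by
    by_contra h
    push_neg at h
    have hlog : Real.log (B a₂) ≤ Real.log (B a₁) := Real.log_le_log hB₂ h
    have hlt : Real.log (a₁ * A) < Real.log (a₂ * A) :=
      Real.log_lt_log (by positivity) (by nlinarith)
    linarith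
  rw [hWmf a₁ ha₁, hWmf a₂ ha₂]
  exact key12 (Pmax * A) (Ws * nr) n (B a₁) (B a₂) (by positivity) (by positivity)
    hn hB₁ hBlt (hconf a₂ ha₂ hc₂)
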